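/- Fix an integer n ≥ 2. For every ε > 0 there exists K ∈ ℕ such that for every integer k ≥ K and every tuple a = (a₁,…,aₙ) of real numbers with 0 < a₁ ≤ a₂ ≤ … ≤ aₙ = 1 one has |σ_k(a)/⌊(k+n−1)/n⌋ − n/(1/a₁ + … + 1/aₙ)| ≤ ε. (That is, the normalized Ekeland–Hofer capacities \bar c_k converge uniformly on ellipsoids to the function c_∞(E(a₁,…,aₙ)) = n/(1/a₁ + … + 1/aₙ).) -/
import Mathlib


/-- `ehSigma a k` is the k-th smallest element (with multiplicity) of the multiset
`{m • aᵢ : m ≥ 1, 1 ≤ i ≤ n}`, characterized as `min {t > 0 : ∑ᵢ ⌊t/aᵢ⌋ ≥ k}`.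
The k-th Ekeland–Hofer capacity of the ellipsoid `E(a)` is `π • ehSigma a k`. -/
noncomputable def ehSigma {n : ℕ} (a : Fin n → ℝ) (k : ℕ) : ℝ :=
  sInf {t : ℝ | 0 < t ∧ (k : ℤ) ≤ ∑ i, ⌊t / a i⌋}

/-- The normalized Ekeland–Hofer capacities `σ_k(a)/⌊(k+n-1)/n⌋` converge uniformly on
ellipsoids `E(a₁,…,aₙ)` with `0 < a₁ ≤ … ≤ aₙ = 1` to `n/(1/a₁ + … + 1/aₙ)`. -/
theorem ehCapacities_converge_uniformly_on_ellipsoids (n : ℕ) (hn : 2 ≤ n) :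
    ∀ ε : ℝ, 0 < ε → ∃ K : ℕ, ∀ k : ℕ, K ≤ k →
      ∀ a : Fin n → ℝ, (∀ i, 0 < a i) → (∀ i j : Fin n, i ≤ j → a i ≤ a j) →
        a ⟨n - 1, by omega⟩ = 1 →
        |ehSigma a k / (((k + n - 1) / n : ℕ) : ℝ) - (n : ℝ) / ∑ i, (a i)⁻¹| ≤ ε := by
  intro ε hε
  refine ⟨n * ⌈1/ε⌉₊, fun k hk a ha hmono hlast => ?_⟩
  have hnpos : 0 < n := by omega
  haveI : Nonempty (Fin n) := ⟨⟨0, hnpos⟩⟩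
  set S := ∑ i, (a i)⁻¹ with hSdef
  -- each a i ≤ 1
  have hale : ∀ i, a i ≤ 1 := by
    intro i
    have h1 : a i ≤ a ⟨n - 1, by omega⟩ := by
      apply hmono
      rw [Fin.le_def]
      have := i.isLt
      simp only
      omega
    rw [hlast] at h1
    exact h1
  have hSn : (n : ℝ) ≤ S := by
    have h1 : ∀ i ∈ Finset.univ, (1:ℝ) ≤ (a i)⁻¹ := by
      intro i _
      rw [le_inv_comm₀ one_pos (ha i)]
      simpa using hale i
    calc (n : ℝ) = ∑ _i : Fin n, (1:ℝ) := by simp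
    _ ≤ S := Finset.sum_le_sum h1
  have hSpos : 0 < S := lt_of_lt_of_le (by exact_mod_cast hnpos) hSn
  -- bounds on the floor sum
  have hsum_le : ∀ t : ℝ, ((∑ i, ⌊t / a i⌋ : ℤ) : ℝ) ≤ t * S := by
    intro t
    push_cast
    calc (∑ i, (⌊t / a i⌋ : ℝ)) ≤ ∑ i, t / a i :=
      Finset.sum_le_sum fun i _ => Int.floor_le _
    _ = t * S := by rw [hSdef, Finset.mul_sum]; simp [div_eq_mul_inv]
  have hsum_gt : ∀ t : ℝ, t * S - n < ((∑ i, ⌊t / a i⌋ : ℤ) : ℝ) := by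
    intro t
    push_cast
    have h1 : ∑ i, (t / a i - 1) < ∑ i, (⌊t / a i⌋ : ℝ) := by
      apply Finset.sum_lt_sum_of_nonempty Finset.univ_nonempty
      intro i _
      exact Int.sub_one_lt_floor _
    calc t * S - n = ∑ i, (t / a i - 1) := by
          rw [hSdef, Finset.sum_sub_distrib, Finset.mul_sum]
          simp [div_eq_mul_inv]
    _ < _ := h1
  -- the defining set
  have hT : ehSigma a k = sInf {t : ℝ | 0 < t ∧ (k : ℤ) ≤ ∑ i, ⌊t / a i⌋} := rfl
  set T := {t : ℝ | 0 < t ∧ (k : ℤ) ≤ ∑ i, ⌊t / a i⌋} with hTdef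
  have ht0 : ((k : ℝ) + n) / S ∈ T := by
    constructor
    · positivity
    · have h1 := hsum_gt (((k : ℝ) + n) / S)
      rw [div_mul_cancel₀ _ hSpos.ne'] at h1
      have h2 : (k : ℝ) < ((∑ i, ⌊((k : ℝ) + n) / S / a i⌋ : ℤ) : ℝ) := by linarith
      exact_mod_cast h2.le
  have hlb : ∀ t ∈ T, (k : ℝ) / S ≤ t := by
    intro t ht
    obtain ⟨htpos, hkt⟩ := ht
    have h1 : (k : ℝ) ≤ ((∑ i, ⌊t / a i⌋ : ℤ) : ℝ) := by exact_mod_cast hkt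
    have h2 : (k : ℝ) ≤ t * S := le_trans h1 (hsum_le t)
    rw [div_le_iff₀ hSpos]
    exact h2
  have hσu : ehSigma a k ≤ ((k : ℝ) + n) / S := by
    rw [hT]
    exact csInf_le ⟨(k : ℝ) / S, fun t ht => hlb t ht⟩ ht0
  have hσl : (k : ℝ) / S ≤ ehSigma a k := by
    rw [hT]
    exact le_csInf ⟨_, ht0⟩ hlb
  -- arithmetic on q = (k + n - 1) / n
  set q := (k + n - 1) / n with hqdef
  have hdm : n * q + (k + n - 1) % n = k + n - 1 := Nat.div_add_mod _ _
  have hmlt := Nat.mod_lt (k + n - 1) hnpos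
  have hq1 : k ≤ n * q := by omega
  have hq2 : n * q ≤ k + n - 1 := by omega
  have hMq : ⌈1/ε⌉₊ ≤ q := by
    have h1 : n * ⌈1/ε⌉₊ ≤ n * q := le_trans hk hq1
    exact Nat.le_of_mul_le_mul_left h1 hnpos
  have hqpos : 0 < q := by
    have : 0 < ⌈1/ε⌉₊ := Nat.ceil_pos.mpr (by positivity)
    omega
  have hQpos : (0 : ℝ) < (q : ℝ) := by exact_mod_cast hqpos
  have hQε : 1 ≤ ε * q := by
    have h1 : 1/ε ≤ (q : ℝ) := le_trans (Nat.le_ceil _) (by exact_mod_cast hMq)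
    rw [div_le_iff₀ hε] at h1
    linarith
  have hk1 : (k : ℝ) ≤ n * q := by exact_mod_cast hq1
  have hk2 : (n : ℝ) * q ≤ k + n - 1 := by
    have h1 : (↑(n * q) : ℝ) ≤ (↑(k + n - 1) : ℝ) := by exact_mod_cast hq2
    push_cast [Nat.cast_sub (by omega : 1 ≤ k + n)] at h1
    linarith
  -- multiply out σ bounds
  have hσu' : ehSigma a k * S ≤ (k : ℝ) + n := by
    rw [le_div_iff₀ hSpos] at hσu; exact hσu
  have hσl' : (k : ℝ) ≤ ehSigma a k * S := by
    rw [div_le_iff₀ hSpos] at hσl; exact hσl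
  have hεQS : S ≤ ε * q * S := by
    nlinarith
  rw [abs_le]
  constructor
  · rw [neg_le, neg_sub, div_sub_div _ _ hSpos.ne' hQpos.ne',
      div_le_iff₀ (by positivity)]
    nlinarith [hσl', hk2, hεQS]
  · rw [div_sub_div _ _ hQpos.ne' hSpos.ne', div_le_iff₀ (by positivity)]
    nlinarith [hσu', hk1, hεQS]
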